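/- arXiv:2209.08761 — 2 statements merged into one kernel-verified Lean document; each statement's English description precedes it below -/
import Mathlib

section
/- Let G be a finite graph that is the union of graphs K and H sharing only the vertices U. Then the quantum reliability operator decomposes as Q̂R_G = Σ_{γ ∈ Γ(U)} Q̂R_{K/γ} ⊗ Ô_γ, where Ô_γ is the orthogonal projection of ℓ²_ℂ(Λ_H) onto the span of states with no islands whose induced partition of U equals γ, under the identification ℓ²_ℂ(Λ_G) ≅ ℓ²_ℂ(Λ_K) ⊗ ℓ²_ℂ(Λ_H). -/
open scoped Classical
noncomputable section

/-- A finite set has finitely many setoids (partitions). -/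
instance setoidFinite (U : Type) [Finite U] : Finite (Setoid U) :=
  Finite.of_injective (fun s => s.r)
    (fun _ _ h => Setoid.ext fun x y => iff_of_eq (congrFun (congrFun h x) y))

noncomputable instance setoidFintype (U : Type) [Finite U] : Fintype (Setoid U) :=
  Fintype.ofFinite _

/-- Adjacency via an operating edge of the state `ε`. -/
def edgeAdj {V E : Type} (s t : E → V) (ε : E → Bool) (x y : V) : Prop :=
  ∃ e, ε e = true ∧ ((s e = x ∧ t e = y) ∨ (s e = y ∧ t e = x))

/-- Connectivity of the spanning subgraph determined by `ε`, on the vertex set `S`,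
after further identifying vertices via the relation `σ`. -/
def ConnectedModOn {V E : Type} (S : Set V) (s t : E → V) (σ : V → V → Prop)
    (ε : E → Bool) : Prop :=
  ∀ x ∈ S, ∀ y ∈ S, Relation.EqvGen (fun a b => edgeAdj s t ε a b ∨ σ a b) x y

/-- A state is connected if the spanning subgraph of operating edges is connected. -/
def ConnectedState {V E : Type} (S : Set V) (s t : E → V) (ε : E → Bool) : Prop :=
  ConnectedModOn S s t (fun _ _ => False) ε

/-- The identification relation on vertices induced by a partition (setoid) `γ` of `U`. -/
def partRel {V : Type} (U : Set V) (γ : Setoid ↥U) : V → V → Prop :=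
  fun a b => ∃ (ha : a ∈ U) (hb : b ∈ U), γ.r ⟨a, ha⟩ ⟨b, hb⟩

/-- The state `ε` has no islands: every vertex of `S` is joined to some vertex of `U`. -/
def NoIslands {V E : Type} (S U : Set V) (s t : E → V) (ε : E → Bool) : Prop :=
  ∀ x ∈ S, ∃ u ∈ U, Relation.EqvGen (edgeAdj s t ε) x u

/-- The partition `P(ε)` of `U` induced by the connected components of the state `ε`. -/
def inducedPart {V E : Type} (U : Set V) (s t : E → V) (ε : E → Bool) : Setoid ↥U :=
  ⟨fun u u' => Relation.EqvGen (edgeAdj s t ε) u.1 u'.1,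
    ⟨fun u => Relation.EqvGen.refl u.1,
     fun h => Relation.EqvGen.symm _ _ h,
     fun h h' => Relation.EqvGen.trans _ _ _ h h'⟩⟩

/-- Probability of the classical state `ε` given Bernoulli parameters `p`. -/
def stProb {E : Type} [Fintype E] (p : E → ℝ) (ε : E → Bool) : ℝ :=
  ∏ e, if ε e then p e else 1 - p e

/-- Reliability: probability that the random state satisfies the connectivity
predicate `Conn`. -/
def relOf {E : Type} [Fintype E] (p : E → ℝ) (Conn : (E → Bool) → Prop) : ℝ :=
  ∑ ε : E → Bool, if Conn ε then stProb p ε else 0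

/-- The hermitian inner product of `ℓ²_ℂ(Λ)`, antilinear in the first argument. -/
def qdot {Λ : Type} [Fintype Λ] (x y : Λ → ℂ) : ℂ :=
  ∑ ε, (starRingEnd ℂ) (x ε) * y ε

/-- The orthogonal projection of `ℓ²_ℂ(Λ)` onto the span of `{|ε⟩ : ε ∈ C}`. -/
def projC {Λ : Type} [Fintype Λ] (C : Set Λ) : (Λ → ℂ) →ₗ[ℂ] (Λ → ℂ) where
  toFun ψ := fun ε => if ε ∈ C then ψ ε else 0
  map_add' x y := by funext ε; by_cases h : ε ∈ C <;> simp [h]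
  map_smul' c x := by funext ε; by_cases h : ε ∈ C <;> simp [h]

/-- Tensor product of operators under `ℓ²(Λ₁ × Λ₂) ≅ ℓ²(Λ₁) ⊗ ℓ²(Λ₂)`. -/
def tensorOp {A B : Type} [Fintype A] [Fintype B]
    (F : (A → ℂ) →ₗ[ℂ] (A → ℂ)) (G : (B → ℂ) →ₗ[ℂ] (B → ℂ)) :
    (A × B → ℂ) →ₗ[ℂ] (A × B → ℂ) where
  toFun ψ := fun q => ∑ x : A × B, ψ x *
    (F (fun a => if a = x.1 then 1 else 0) q.1 * G (fun b => if b = x.2 then 1 else 0) q.2)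
  map_add' x y := by
    funext q
    simp [add_mul, Finset.sum_add_distrib]
  map_smul' c x := by
    funext q
    simp only [Pi.smul_apply, smul_eq_mul, RingHom.id_apply]
    rw [Finset.mul_sum]
    exact Finset.sum_congr rfl (fun x _ => by ring)

/-- Tensor product of state vectors. -/
def vtens {A B : Type} (ψ₁ : A → ℂ) (ψ₂ : B → ℂ) : A × B → ℂ :=
  fun q => ψ₁ q.1 * ψ₂ q.2

/-- Entry of the connectivity matrix: `1` if the common coarsening of the two
partitions has a single block, `0` otherwise.  (In Mathlib's order on `Setoid U`,
the common coarsening is the join `γ ⊔ γ'`, and having a single block means `= ⊤`.) -/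
def connMatrix (U : Type) [Finite U] : Matrix (Setoid U) (Setoid U) ℝ :=
  fun γ γ' => if γ ⊔ γ' = ⊤ then 1 else 0

lemma tensorOp_projC {A B : Type} [Fintype A] [Fintype B] (C1 : Set A) (C2 : Set B) :
    tensorOp (projC C1) (projC C2) = projC {x : A × B | x.1 ∈ C1 ∧ x.2 ∈ C2} := by
  apply LinearMap.ext; intro ψ; funext q
  show (∑ x : A × B, ψ x * _) = _
  rw [Fintype.sum_eq_single q]
  · simp only [projC, LinearMap.coe_mk, AddHom.coe_mk, Set.mem_setOf_eq]
    by_cases h1 : q.1 ∈ C1 <;> by_cases h2 : q.2 ∈ C2 <;> simp [h1, h2]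
  · intro x hx
    simp only [projC, LinearMap.coe_mk, AddHom.coe_mk]
    by_cases ha : q.1 = x.1
    · have hb : ¬ q.2 = x.2 := fun hb => hx (Prod.ext ha hb).symm
      simp [ha, hb]
    · simp [ha]

lemma edgeAdj_sum {V EK EH : Type} (sK tK : EK → V) (sH tH : EH → V)
    (εK : EK → Bool) (εH : EH → Bool) (x y : V) :
    edgeAdj (Sum.elim sK sH) (Sum.elim tK tH) (Sum.elim εK εH) x y ↔
      edgeAdj sK tK εK x y ∨ edgeAdj sH tH εH x y := by
  constructor
  · rintro ⟨(e | e), he, h⟩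
    · exact Or.inl ⟨e, he, h⟩
    · exact Or.inr ⟨e, he, h⟩
  · rintro (⟨e, he, h⟩ | ⟨e, he, h⟩)
    · exact ⟨Sum.inl e, he, h⟩
    · exact ⟨Sum.inr e, he, h⟩

lemma eqvgen_mem {V E : Type} (S : Set V) (s t : E → V)
    (hS : ∀ e, s e ∈ S ∧ t e ∈ S) (ε : E → Bool) :
    ∀ a b, Relation.EqvGen (edgeAdj s t ε) a b → a = b ∨ (a ∈ S ∧ b ∈ S) := by
  intro a b h
  induction h with
  | rel a b hab =>
    right
    obtain ⟨e, -, (⟨h1, h2⟩ | ⟨h1, h2⟩)⟩ := hab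
    · exact ⟨h1 ▸ (hS e).1, h2 ▸ (hS e).2⟩
    · exact ⟨h2 ▸ (hS e).2, h1 ▸ (hS e).1⟩
  | refl a => exact Or.inl rfl
  | symm a b _ ih => rcases ih with h | h; exacts [Or.inl h.symm, Or.inr ⟨h.2, h.1⟩]
  | trans a b c _ _ ih1 ih2 =>
    rcases ih1 with h | h
    · exact h ▸ ih2
    · rcases ih2 with h' | h'
      · exact Or.inr (h' ▸ h)
      · exact Or.inr ⟨h.1, h'.2⟩

theorem connected_iff {V EK EH : Type}
    (VK VH : Set V) (hcover : VK ∪ VH = Set.univ) (hU : (VK ∩ VH).Nonempty)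
    (sK tK : EK → V) (hK : ∀ e, sK e ∈ VK ∧ tK e ∈ VK)
    (sH tH : EH → V) (hH : ∀ e, sH e ∈ VH ∧ tH e ∈ VH)
    (εK : EK → Bool) (εH : EH → Bool) :
    ConnectedState Set.univ (Sum.elim sK sH) (Sum.elim tK tH) (Sum.elim εK εH) ↔
      (NoIslands VH (VK ∩ VH) sH tH εH ∧
       ConnectedModOn VK sK tK (partRel (VK ∩ VH) (inducedPart (VK ∩ VH) sH tH εH)) εK) := by
  set RK := edgeAdj sK tK εK with hRK
  set RH := edgeAdj sH tH εH with hRH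
  have hmemVH : ∀ v : V, v ∉ VK → v ∈ VH := by
    intro v hv
    have : v ∈ VK ∪ VH := hcover ▸ Set.mem_univ v
    exact this.resolve_left hv
  have hσ : ∀ a b, partRel (VK ∩ VH) (inducedPart (VK ∩ VH) sH tH εH) a b ↔
      (a ∈ VK ∩ VH ∧ b ∈ VK ∩ VH ∧ Relation.EqvGen RH a b) := by
    intro a b
    constructor
    · rintro ⟨ha, hb, h⟩; exact ⟨ha, hb, h⟩
    · rintro ⟨ha, hb, h⟩; exact ⟨ha, hb, h⟩
  constructor
  · intro hconn
    -- No islands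
    have hNI : NoIslands VH (VK ∩ VH) sH tH εH := by
      intro x hx
      by_cases hxK : x ∈ VK
      · exact ⟨x, ⟨hxK, hx⟩, Relation.EqvGen.refl x⟩
      · obtain ⟨u0, hu0⟩ := hU
        have hpath := hconn x (Set.mem_univ x) u0 (Set.mem_univ u0)
        -- key invariant
        have key : ∀ a b, Relation.EqvGen
            (fun p q => edgeAdj (Sum.elim sK sH) (Sum.elim tK tH) (Sum.elim εK εH) p q ∨ False) a b →
            ((Relation.EqvGen RH x a → (∃ u ∈ VK ∩ VH, Relation.EqvGen RH x u) ∨ Relation.EqvGen RH x b) ∧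
             (Relation.EqvGen RH x b → (∃ u ∈ VK ∩ VH, Relation.EqvGen RH x u) ∨ Relation.EqvGen RH x a)) := by
          intro a b h
          induction h with
          | rel a b hab =>
            rcases ((edgeAdj_sum sK tK sH tH εK εH a b).mp (hab.resolve_right (fun h => h))) with hk | hh
            · have haK : a ∈ VK := by
                obtain ⟨e, -, (⟨h1, h2⟩ | ⟨h1, h2⟩)⟩ := hk
                exacts [h1 ▸ (hK e).1, h2 ▸ (hK e).2]
              have hbK : b ∈ VK := by
                obtain ⟨e, -, (⟨h1, h2⟩ | ⟨h1, h2⟩)⟩ := hk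
                exacts [h2 ▸ (hK e).2, h1 ▸ (hK e).1]
              constructor
              · intro hxa
                left
                have haH : a ∈ VH := by
                  rcases eqvgen_mem VH sH tH hH εH x a hxa with h | h
                  exacts [h ▸ hx, h.2]
                exact ⟨a, ⟨haK, haH⟩, hxa⟩
              · intro hxb
                left
                have hbH : b ∈ VH := by
                  rcases eqvgen_mem VH sH tH hH εH x b hxb with h | h
                  exacts [h ▸ hx, h.2]
                exact ⟨b, ⟨hbK, hbH⟩, hxb⟩
            · exact ⟨fun hxa => Or.inr (hxa.trans _ _ _ (Relation.EqvGen.rel _ _ hh)),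
                fun hxb => Or.inr (hxb.trans _ _ _ (Relation.EqvGen.symm _ _ (Relation.EqvGen.rel _ _ hh)))⟩
          | refl a => exact ⟨fun h => Or.inr h, fun h => Or.inr h⟩
          | symm a b _ ih => exact ⟨ih.2, ih.1⟩
          | trans a b c _ _ ih1 ih2 =>
            constructor
            · intro hxa
              rcases ih1.1 hxa with h | h
              · exact Or.inl h
              · exact ih2.1 h
            · intro hxc
              rcases ih2.2 hxc with h | h
              · exact Or.inl h
              · exact ih1.2 h
        rcases (key x u0 hpath).1 (Relation.EqvGen.refl x) with h | h
        · exact h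
        · exact ⟨u0, hu0, h⟩
    refine ⟨hNI, ?_⟩
    -- representative function
    have hrex : ∀ v : V, ∃ u, (v ∈ VK → u = v) ∧
        (v ∉ VK → u ∈ VK ∩ VH ∧ Relation.EqvGen RH v u) := by
      intro v
      by_cases hv : v ∈ VK
      · exact ⟨v, fun _ => rfl, fun h => absurd hv h⟩
      · obtain ⟨u, hu, hvu⟩ := hNI v (hmemVH v hv)
        exact ⟨u, fun h => absurd h hv, fun _ => ⟨hu, hvu⟩⟩
    choose r hr1 hr2 using hrex
    set σ := partRel (VK ∩ VH) (inducedPart (VK ∩ VH) sH tH εH) with hσdef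
    have hrU : ∀ v, v ∈ VH → (r v ∈ VK ∩ VH ∧ Relation.EqvGen RH v (r v)) := by
      intro v hv
      by_cases hvK : v ∈ VK
      · rw [hr1 v hvK]; exact ⟨⟨hvK, hv⟩, Relation.EqvGen.refl v⟩
      · exact hr2 v hvK
    have step : ∀ a b, (RK a b ∨ RH a b) →
        Relation.EqvGen (fun p q => RK p q ∨ σ p q) (r a) (r b) := by
      rintro a b (hk | hh)
      · have haK : a ∈ VK := by
          obtain ⟨e, -, (⟨h1, h2⟩ | ⟨h1, h2⟩)⟩ := hk
          exacts [h1 ▸ (hK e).1, h2 ▸ (hK e).2]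
        have hbK : b ∈ VK := by
          obtain ⟨e, -, (⟨h1, h2⟩ | ⟨h1, h2⟩)⟩ := hk
          exacts [h2 ▸ (hK e).2, h1 ▸ (hK e).1]
        rw [hr1 a haK, hr1 b hbK]
        exact Relation.EqvGen.rel _ _ (Or.inl hk)
      · have haH : a ∈ VH := by
          obtain ⟨e, -, (⟨h1, h2⟩ | ⟨h1, h2⟩)⟩ := hh
          exacts [h1 ▸ (hH e).1, h2 ▸ (hH e).2]
        have hbH : b ∈ VH := by
          obtain ⟨e, -, (⟨h1, h2⟩ | ⟨h1, h2⟩)⟩ := hh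
          exacts [h2 ▸ (hH e).2, h1 ▸ (hH e).1]
        obtain ⟨haU, hra⟩ := hrU a haH
        obtain ⟨hbU, hrb⟩ := hrU b hbH
        refine Relation.EqvGen.rel _ _ (Or.inr ((hσ _ _).mpr ⟨haU, hbU, ?_⟩))
        exact ((Relation.EqvGen.symm _ _ hra).trans _ _ _
          (Relation.EqvGen.rel _ _ hh)).trans _ _ _ hrb
    have main : ∀ a b, Relation.EqvGen
        (fun p q => edgeAdj (Sum.elim sK sH) (Sum.elim tK tH) (Sum.elim εK εH) p q ∨ False) a b →
        Relation.EqvGen (fun p q => RK p q ∨ σ p q) (r a) (r b) := by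
      intro a b h
      induction h with
      | rel a b hab =>
        exact step a b ((edgeAdj_sum sK tK sH tH εK εH a b).mp (hab.resolve_right (fun h => h)))
      | refl a => exact Relation.EqvGen.refl _
      | symm a b _ ih => exact ih.symm _ _
      | trans a b c _ _ ih1 ih2 => exact ih1.trans _ _ _ ih2
    intro x hx y hy
    have := main x y (hconn x (Set.mem_univ x) y (Set.mem_univ y))
    rwa [hr1 x hx, hr1 y hy] at this
  · rintro ⟨hNI, hC⟩
    intro x _ y _
    set comb := fun p q => edgeAdj (Sum.elim sK sH) (Sum.elim tK tH) (Sum.elim εK εH) p q ∨ False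
      with hcomb
    have hmonoH : ∀ a b, Relation.EqvGen RH a b → Relation.EqvGen comb a b := by
      intro a b h
      exact Relation.EqvGen.mono (fun p q hpq =>
        Or.inl ((edgeAdj_sum sK tK sH tH εK εH p q).mpr (Or.inr hpq))) _ _ h
    have hmonoK : ∀ a b, Relation.EqvGen
        (fun p q => RK p q ∨ partRel (VK ∩ VH) (inducedPart (VK ∩ VH) sH tH εH) p q) a b →
        Relation.EqvGen comb a b := by
      intro a b h
      induction h with
      | rel a b hab =>
        rcases hab with hk | hs
        · exact Relation.EqvGen.rel _ _
            (Or.inl ((edgeAdj_sum sK tK sH tH εK εH a b).mpr (Or.inl hk)))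
        · exact hmonoH a b ((hσ a b).mp hs).2.2
      | refl a => exact Relation.EqvGen.refl _
      | symm a b _ ih => exact ih.symm _ _
      | trans a b c _ _ ih1 ih2 => exact ih1.trans _ _ _ ih2
    have toVK : ∀ v : V, ∃ w ∈ VK, Relation.EqvGen comb v w := by
      intro v
      by_cases hv : v ∈ VK
      · exact ⟨v, hv, Relation.EqvGen.refl v⟩
      · obtain ⟨u, hu, hvu⟩ := hNI v (hmemVH v hv)
        exact ⟨u, hu.1, hmonoH v u hvu⟩
    obtain ⟨wx, hwx, hx'⟩ := toVK x
    obtain ⟨wy, hwy, hy'⟩ := toVK y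
    exact (hx'.trans _ _ _ (hmonoK wx wy (hC wx hwx wy hwy))).trans _ _ _
      (Relation.EqvGen.symm _ _ hy')

/-- the quantum reliability operator of the union `G = K ∪ H`
decomposes as `Q̂R_G = Σ_γ Q̂R_{K/γ} ⊗ Ô_γ`, where `Ô_γ` projects onto the span
of island-free states of `H` inducing the partition `γ` of `U`. -/
theorem qr_operator_island_decomposition {V EK EH : Type}
    [Fintype V] [Fintype EK] [Fintype EH]
    (VK VH : Set V) (hcover : VK ∪ VH = Set.univ) (hU : (VK ∩ VH).Nonempty)
    (sK tK : EK → V) (hK : ∀ e, sK e ∈ VK ∧ tK e ∈ VK)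
    (sH tH : EH → V) (hH : ∀ e, sH e ∈ VH ∧ tH e ∈ VH) :
    projC {εp : (EK → Bool) × (EH → Bool) |
        ConnectedState Set.univ (Sum.elim sK sH) (Sum.elim tK tH)
          (Sum.elim εp.1 εp.2)}
      = ∑ γ : Setoid ↥(VK ∩ VH),
          tensorOp
            (projC {ε : EK → Bool | ConnectedModOn VK sK tK (partRel (VK ∩ VH) γ) ε})
            (projC {ε : EH → Bool | NoIslands VH (VK ∩ VH) sH tH ε ∧
                inducedPart (VK ∩ VH) sH tH ε = γ}) := by
  apply LinearMap.ext; intro ψ; funext q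
  have hmain := connected_iff VK VH hcover hU sK tK hK sH tH hH q.1 q.2
  simp only [tensorOp_projC, LinearMap.sum_apply, Finset.sum_apply]
  simp only [projC, LinearMap.coe_mk, AddHom.coe_mk, Set.mem_setOf_eq]
  rw [Fintype.sum_eq_single (inducedPart (VK ∩ VH) sH tH q.2)]
  · by_cases h : ConnectedState Set.univ (Sum.elim sK sH) (Sum.elim tK tH)
        (Sum.elim q.1 q.2)
    · rw [if_pos h, if_pos]
      obtain ⟨h1, h2⟩ := hmain.mp h
      exact ⟨h2, h1, rfl⟩
    · rw [if_neg h, if_neg]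
      rintro ⟨h2, h1, he⟩
      exact h (hmain.mpr ⟨h1, he ▸ h2⟩)
  · intro γ hγ
    rw [if_neg]
    rintro ⟨-, -, he⟩
    exact hγ he.symm
end
end

section
/- Negami splitting for classical reliability: if G is the union of graphs K and H sharing only the vertices U, with independent edge Bernoulli parameters, then R_G = Σ_{γ,γ' ∈ Γ(U)} β_{γ,γ'} R_{K/γ} · R_{H/γ'}, where β is the inverse of the connectivity matrix of the partition lattice Γ(U) and each quotient graph keeps the same edge parameters. -/
open scoped Classical
noncomputable section

section NegamiAux
variable {V : Type}

lemma eqvGen_le {r p : V → V → Prop} (hp : Equivalence p)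
    (h : ∀ a b, r a b → p a b) : ∀ {x y}, Relation.EqvGen r x y → p x y := by
  intro x y hxy
  induction hxy with
  | rel a b hab => exact h a b hab
  | refl a => exact hp.refl a
  | symm a b _ ih => exact hp.symm ih
  | trans a b c _ _ ih1 ih2 => exact hp.trans ih1 ih2

lemma eqvGen_congr {r p : V → V → Prop} (h : ∀ a b, r a b ↔ p a b) {x y} :
    Relation.EqvGen r x y ↔ Relation.EqvGen p x y :=
  ⟨Relation.EqvGen.mono (fun a b hab => (h a b).mp hab) x y,
   Relation.EqvGen.mono (fun a b hab => (h a b).mpr hab) x y⟩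

variable (U : Set V) (R1 R2 : V → V → Prop)

/-- The "bridge" decomposition predicate. -/
def GenD (x y : V) : Prop :=
  ∃ u u' : ↥U, (R1 x u.1 ∨ R2 x u.1) ∧
    Relation.EqvGen (fun v v' : ↥U => R1 v.1 v'.1 ∨ R2 v.1 v'.1) u u' ∧
    (R1 u'.1 y ∨ R2 u'.1 y)

def GenP (x y : V) : Prop := R1 x y ∨ R2 x y ∨ GenD U R1 R2 x y

variable {U R1 R2}
variable (h1 : Equivalence R1) (h2 : Equivalence R2)

section
include h1 h2

lemma genP_symm {x y} (h : GenP U R1 R2 x y) : GenP U R1 R2 y x := by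
  rcases h with h | h | ⟨u, u', l1, q, l2⟩
  · exact Or.inl (h1.symm h)
  · exact Or.inr (Or.inl (h2.symm h))
  · exact Or.inr (Or.inr ⟨u', u, l2.imp h1.symm h2.symm,
      Relation.EqvGen.symm _ _ q, l1.imp h1.symm h2.symm⟩)

variable {W1 W2 : Set V}
variable (hm1 : ∀ a b, R1 a b → a = b ∨ (a ∈ W1 ∧ b ∈ W1))
  (hm2 : ∀ a b, R2 a b → a = b ∨ (a ∈ W2 ∧ b ∈ W2))
  (hcross : ∀ b, b ∈ W1 → b ∈ W2 → b ∈ U)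
include hm1 hm2 hcross

lemma genComp {a b c : V} (hab : R1 a b ∨ R2 a b) (hbc : R1 b c ∨ R2 b c) :
    (R1 a c ∨ R2 a c) ∨ (b ∈ U ∧ (R1 a b ∨ R2 a b) ∧ (R1 b c ∨ R2 b c)) := by
  rcases hab with hab | hab <;> rcases hbc with hbc | hbc
  · exact Or.inl (Or.inl (h1.trans hab hbc))
  · rcases hm1 a b hab with rfl | ⟨_, hb1⟩
    · exact Or.inl (Or.inr hbc)
    · rcases hm2 b c hbc with rfl | ⟨hb2, _⟩
      · exact Or.inl (Or.inl hab)
      · exact Or.inr ⟨hcross b hb1 hb2, Or.inl hab, Or.inr hbc⟩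
  · rcases hm2 a b hab with rfl | ⟨_, hb2⟩
    · exact Or.inl (Or.inl hbc)
    · rcases hm1 b c hbc with rfl | ⟨hb1, _⟩
      · exact Or.inl (Or.inr hab)
      · exact Or.inr ⟨hcross b hb1 hb2, Or.inr hab, Or.inl hbc⟩
  · exact Or.inl (Or.inr (h2.trans hab hbc))

lemma genP_transLD {x y z} (hxy : R1 x y ∨ R2 x y) (hyz : GenP U R1 R2 y z) :
    GenP U R1 R2 x z := by
  rcases hyz with h | h | ⟨u, u', l1, q, l2⟩
  · rcases genComp h1 h2 hm1 hm2 hcross hxy (Or.inl h) with h' | ⟨hbU, leg1, leg2⟩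
    · exact Or.imp_right Or.inl h'
    · exact Or.inr (Or.inr ⟨⟨y, hbU⟩, ⟨y, hbU⟩, leg1, Relation.EqvGen.refl _, leg2⟩)
  · rcases genComp h1 h2 hm1 hm2 hcross hxy (Or.inr h) with h' | ⟨hbU, leg1, leg2⟩
    · exact Or.imp_right Or.inl h'
    · exact Or.inr (Or.inr ⟨⟨y, hbU⟩, ⟨y, hbU⟩, leg1, Relation.EqvGen.refl _, leg2⟩)
  · rcases genComp h1 h2 hm1 hm2 hcross hxy l1 with h' | ⟨hbU, leg1, leg2⟩
    · exact Or.inr (Or.inr ⟨u, u', h', q, l2⟩)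
    · exact Or.inr (Or.inr ⟨⟨y, hbU⟩, u', leg1,
        Relation.EqvGen.trans _ _ _ (Relation.EqvGen.rel _ _ leg2) q, l2⟩)

lemma genP_trans {x y z} (hxy : GenP U R1 R2 x y) (hyz : GenP U R1 R2 y z) :
    GenP U R1 R2 x z := by
  rcases hxy with h | h | ⟨u, u', l1, q, l2⟩
  · exact genP_transLD h1 h2 hm1 hm2 hcross (Or.inl h) hyz
  · exact genP_transLD h1 h2 hm1 hm2 hcross (Or.inr h) hyz
  · have key : GenP U R1 R2 u'.1 z := genP_transLD h1 h2 hm1 hm2 hcross l2 hyz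
    rcases key with h' | h' | ⟨v, v', m1, q2, m2⟩
    · exact Or.inr (Or.inr ⟨u, u', l1, q, Or.inl h'⟩)
    · exact Or.inr (Or.inr ⟨u, u', l1, q, Or.inr h'⟩)
    · exact Or.inr (Or.inr ⟨u, v', l1,
        Relation.EqvGen.trans _ _ _ q
          (Relation.EqvGen.trans _ _ _ (Relation.EqvGen.rel _ _ m1) q2), m2⟩)

lemma gen_decomp {x y : V} :
    Relation.EqvGen (fun a b => R1 a b ∨ R2 a b) x y ↔ GenP U R1 R2 x y := by
  constructor
  · intro h
    induction h with
    | rel a b hab => exact hab.imp id Or.inl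
    | refl a => exact Or.inl (h1.refl a)
    | symm a b _ ih => exact genP_symm h1 h2 ih
    | trans a b c _ _ ih1 ih2 => exact genP_trans h1 h2 hm1 hm2 hcross ih1 ih2
  · intro h
    have lift : ∀ {u u' : ↥U},
        Relation.EqvGen (fun v v' : ↥U => R1 v.1 v'.1 ∨ R2 v.1 v'.1) u u' →
        Relation.EqvGen (fun a b => R1 a b ∨ R2 a b) u.1 u'.1 := by
      intro u u' hq
      induction hq with
      | rel a b hab => exact Relation.EqvGen.rel _ _ hab
      | refl a => exact Relation.EqvGen.refl _
      | symm a b _ ih => exact Relation.EqvGen.symm _ _ ih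
      | trans a b c _ _ ih1 ih2 => exact Relation.EqvGen.trans _ _ _ ih1 ih2
    rcases h with h | h | ⟨u, u', l1, q, l2⟩
    · exact Relation.EqvGen.rel _ _ (Or.inl h)
    · exact Relation.EqvGen.rel _ _ (Or.inr h)
    · exact Relation.EqvGen.trans _ _ _ (Relation.EqvGen.rel _ _ l1)
        (Relation.EqvGen.trans _ _ _ (lift q) (Relation.EqvGen.rel _ _ l2))

end
end NegamiAux
section NegamiGraph
variable {V E : Type}

lemma edgeAdj_symm (s t : E → V) (ε : E → Bool) {a b : V}
    (h : edgeAdj s t ε a b) : edgeAdj s t ε b a := by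
  obtain ⟨e, he, h⟩ := h
  exact ⟨e, he, h.symm⟩

lemma reachEquiv (s t : E → V) (ε : E → Bool) :
    Equivalence (Relation.EqvGen (edgeAdj s t ε)) :=
  Relation.EqvGen.is_equivalence _

lemma reach_mem {W : Set V} {s t : E → V} (hW : ∀ e, s e ∈ W ∧ t e ∈ W)
    (ε : E → Bool) {a b : V} (h : Relation.EqvGen (edgeAdj s t ε) a b) :
    a = b ∨ (a ∈ W ∧ b ∈ W) := by
  induction h with
  | rel a b hab =>
    obtain ⟨e, _, h⟩ := hab
    rcases h with ⟨hs, ht⟩ | ⟨hs, ht⟩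
    · exact Or.inr ⟨hs ▸ (hW e).1, ht ▸ (hW e).2⟩
    · exact Or.inr ⟨ht ▸ (hW e).2, hs ▸ (hW e).1⟩
  | refl a => exact Or.inl rfl
  | symm a b _ ih => exact ih.imp Eq.symm And.symm
  | trans a b c _ _ ih1 ih2 =>
    rcases ih1 with rfl | ⟨h1, h2⟩
    · exact ih2
    · rcases ih2 with rfl | ⟨h3, h4⟩
      · exact Or.inr ⟨h1, h2⟩
      · exact Or.inr ⟨h1, h4⟩

/-- collapse: EqvGen over (adj ∨ σ) equals EqvGen over (EqvGen adj ∨ σ'). -/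
lemma eqvGen_collapse {A σ σ' : V → V → Prop}
    (hσ : ∀ a b, σ a b → σ' a b)
    (hσ' : ∀ a b, σ' a b → Relation.EqvGen (fun c d => A c d ∨ σ c d) a b)
    {x y : V} :
    Relation.EqvGen (fun a b => A a b ∨ σ a b) x y ↔
      Relation.EqvGen (fun a b => Relation.EqvGen A a b ∨ σ' a b) x y := by
  constructor
  · exact Relation.EqvGen.mono (fun a b (hab : A a b ∨ σ a b) =>
      hab.imp (Relation.EqvGen.rel a b) (hσ a b)) x y
  · intro h
    refine eqvGen_le (Relation.EqvGen.is_equivalence _) ?_ h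
    rintro a b (hab | hab)
    · exact Relation.EqvGen.mono (fun c d h => Or.inl h) _ _ hab
    · exact hσ' a b hab

end NegamiGraph
section NegamiKey

lemma adj_sum_iff {V EK EH : Type} (sK tK : EK → V) (sH tH : EH → V)
    (ε : EK ⊕ EH → Bool) (a b : V) :
    edgeAdj (Sum.elim sK sH) (Sum.elim tK tH) ε a b ↔
      edgeAdj sK tK (fun e => ε (Sum.inl e)) a b ∨
        edgeAdj sH tH (fun e => ε (Sum.inr e)) a b := by
  constructor
  · rintro ⟨e, he, h⟩
    cases e with
    | inl e => exact Or.inl ⟨e, he, h⟩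
    | inr e => exact Or.inr ⟨e, he, h⟩
  · rintro (⟨e, he, h⟩ | ⟨e, he, h⟩)
    · exact ⟨Sum.inl e, he, h⟩
    · exact ⟨Sum.inr e, he, h⟩

lemma connMod_iff {V E : Type} {W : Set V} (U : Set V) (hsub : U ⊆ W)
    (hU : U.Nonempty)
    {s t : E → V} (hK : ∀ e, s e ∈ W ∧ t e ∈ W)
    (γ : Setoid ↥U) (ε : E → Bool) :
    ConnectedModOn W s t (partRel U γ) ε ↔
      NoIslands W U s t ε ∧ inducedPart U s t ε ⊔ γ = ⊤ := by
  let R1 := Relation.EqvGen (edgeAdj s t ε)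
  let R2 : V → V → Prop := fun a b => a = b ∨ partRel U γ a b
  have h1 : Equivalence R1 := Relation.EqvGen.is_equivalence _
  have h2 : Equivalence R2 := by
    constructor
    · exact fun a => Or.inl rfl
    · rintro a b (rfl | ⟨ha, hb, hg⟩)
      · exact Or.inl rfl
      · exact Or.inr ⟨hb, ha, γ.iseqv.symm hg⟩
    · rintro a b c (rfl | ⟨ha, hb, hg⟩) h
      · exact h
      · rcases h with rfl | ⟨hb', hc, hg'⟩
        · exact Or.inr ⟨ha, hb, hg⟩
        · exact Or.inr ⟨ha, hc, γ.iseqv.trans hg hg'⟩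
  have hm1 : ∀ a b, R1 a b → a = b ∨ (a ∈ W ∧ b ∈ W) := fun a b h => reach_mem hK ε h
  have hm2 : ∀ a b, R2 a b → a = b ∨ (a ∈ U ∧ b ∈ U) := by
    rintro a b (rfl | ⟨ha, hb, _⟩)
    · exact Or.inl rfl
    · exact Or.inr ⟨ha, hb⟩
  have hcross : ∀ b : V, b ∈ W → b ∈ U → b ∈ U := fun b _ h => h
  have conv : ∀ x y : V,
      Relation.EqvGen (fun a b => edgeAdj s t ε a b ∨ partRel U γ a b) x y ↔
        GenP U R1 R2 x y := by
    intro x y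
    refine Iff.trans (eqvGen_collapse (σ' := R2) (fun a b h => Or.inr h) ?_)
      (gen_decomp h1 h2 hm1 hm2 hcross)
    rintro a b (rfl | h)
    · exact Relation.EqvGen.refl a
    · exact Relation.EqvGen.rel _ _ (Or.inr h)
  let δ0 := inducedPart U s t ε
  have hsup : ∀ v v' : ↥U, (δ0 ⊔ γ) v v' ↔
      Relation.EqvGen (fun a b : ↥U => δ0 a b ∨ γ a b) v v' := by
    intro v v'; rw [Setoid.sup_eq_eqvGen]; rfl
  have toQ : ∀ v u : ↥U, (R1 v.1 u.1 ∨ R2 v.1 u.1) →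
      Relation.EqvGen (fun a b : ↥U => δ0 a b ∨ γ a b) v u := by
    rintro v u (h | h)
    · exact Relation.EqvGen.rel _ _ (Or.inl h)
    · rcases h with heq | ⟨ha, hb, hg⟩
      · cases Subtype.ext heq; exact Relation.EqvGen.refl v
      · exact Relation.EqvGen.rel _ _ (Or.inr hg)
  have liftQ : ∀ {u u' : ↥U},
      Relation.EqvGen (fun v v' : ↥U => R1 v.1 v'.1 ∨ R2 v.1 v'.1) u u' →
      Relation.EqvGen (fun a b : ↥U => δ0 a b ∨ γ a b) u u' :=
    fun h => eqvGen_le (Relation.EqvGen.is_equivalence _) (fun a b hab => toQ a b hab) h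
  have hUK : ∀ a : V, a ∈ U → a ∈ W := fun a ha => hsub ha
  constructor
  · intro hconn
    obtain ⟨u0, hu0⟩ := hU
    have hNI : NoIslands W U s t ε := by
      intro x hx
      have hG := (conv x u0).mp (hconn x hx u0 (hUK u0 hu0))
      rcases hG with h | h | ⟨u, u', l1, q, l2⟩
      · exact ⟨u0, hu0, h⟩
      · rcases h with rfl | ⟨ha, _, _⟩
        · exact ⟨x, hu0, Relation.EqvGen.refl x⟩
        · exact ⟨x, ha, Relation.EqvGen.refl x⟩
      · rcases l1 with h | h
        · exact ⟨u.1, u.2, h⟩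
        · rcases h with heq | ⟨ha, _, _⟩
          · exact ⟨u.1, u.2, heq ▸ Relation.EqvGen.refl x⟩
          · exact ⟨x, ha, Relation.EqvGen.refl x⟩
    refine ⟨hNI, ?_⟩
    rw [Setoid.eq_top_iff]
    intro v v'
    rw [hsup]
    have hG := (conv v.1 v'.1).mp (hconn v.1 (hUK v.1 v.2) v'.1 (hUK v'.1 v'.2))
    rcases hG with h | h | ⟨u, u', l1, q, l2⟩
    · exact toQ v v' (Or.inl h)
    · exact toQ v v' (Or.inr h)
    · exact Relation.EqvGen.trans _ _ _ (toQ v u l1)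
        (Relation.EqvGen.trans _ _ _ (liftQ q) (toQ u' v' l2))
  · rintro ⟨hNI, htop⟩ x hx y hy
    obtain ⟨u, huU, hxu⟩ := hNI x hx
    obtain ⟨u', hu'U, hyu'⟩ := hNI y hy
    have hq : Relation.EqvGen (fun a b : ↥U => δ0 a b ∨ γ a b) ⟨u, huU⟩ ⟨u', hu'U⟩ :=
      (hsup _ _).mp (Setoid.eq_top_iff.mp htop _ _)
    have lift2 : ∀ {a b : ↥U}, Relation.EqvGen (fun a b : ↥U => δ0 a b ∨ γ a b) a b →
        Relation.EqvGen (fun a b => edgeAdj s t ε a b ∨ partRel U γ a b) a.1 b.1 := by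
      intro a b h
      induction h with
      | rel a b hab =>
        rcases hab with h | h
        · exact Relation.EqvGen.mono (fun c d h => Or.inl h) _ _ h
        · exact Relation.EqvGen.rel _ _ (Or.inr ⟨a.2, b.2, h⟩)
      | refl a => exact Relation.EqvGen.refl _
      | symm a b _ ih => exact Relation.EqvGen.symm _ _ ih
      | trans a b c _ _ ih1 ih2 => exact Relation.EqvGen.trans _ _ _ ih1 ih2
    refine Relation.EqvGen.trans _ _ _
      (Relation.EqvGen.mono (fun c d h => Or.inl h) _ _ hxu)
      (Relation.EqvGen.trans _ _ _ (lift2 hq)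
        (Relation.EqvGen.symm _ _ (Relation.EqvGen.mono (fun c d h => Or.inl h) _ _ hyu')))

end NegamiKey
section NegamiState

lemma connState_iff {V EK EH : Type} {VK VH : Set V} (hcover : VK ∪ VH = Set.univ)
    (hU : (VK ∩ VH).Nonempty)
    {sK tK : EK → V} (hK : ∀ e, sK e ∈ VK ∧ tK e ∈ VK)
    {sH tH : EH → V} (hH : ∀ e, sH e ∈ VH ∧ tH e ∈ VH)
    (ε : EK ⊕ EH → Bool) :
    ConnectedState Set.univ (Sum.elim sK sH) (Sum.elim tK tH) ε ↔
      NoIslands VK (VK ∩ VH) sK tK (fun e => ε (Sum.inl e)) ∧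
      NoIslands VH (VK ∩ VH) sH tH (fun e => ε (Sum.inr e)) ∧
      inducedPart (VK ∩ VH) sK tK (fun e => ε (Sum.inl e)) ⊔
        inducedPart (VK ∩ VH) sH tH (fun e => ε (Sum.inr e)) = ⊤ := by
  let U := VK ∩ VH
  let εK : EK → Bool := fun e => ε (Sum.inl e)
  let εH : EH → Bool := fun e => ε (Sum.inr e)
  let R1 := Relation.EqvGen (edgeAdj sK tK εK)
  let R2 := Relation.EqvGen (edgeAdj sH tH εH)
  have h1 : Equivalence R1 := Relation.EqvGen.is_equivalence _
  have h2 : Equivalence R2 := Relation.EqvGen.is_equivalence _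
  have hm1 : ∀ a b, R1 a b → a = b ∨ (a ∈ VK ∧ b ∈ VK) := fun a b h => reach_mem hK εK h
  have hm2 : ∀ a b, R2 a b → a = b ∨ (a ∈ VH ∧ b ∈ VH) := fun a b h => reach_mem hH εH h
  have hcross : ∀ b : V, b ∈ VK → b ∈ VH → b ∈ U := fun b ha hb => ⟨ha, hb⟩
  have conv : ∀ x y : V,
      Relation.EqvGen
        (fun a b => edgeAdj (Sum.elim sK sH) (Sum.elim tK tH) ε a b ∨ False) x y ↔
      GenP U R1 R2 x y := by
    intro x y
    have step1 : Relation.EqvGen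
        (fun a b => edgeAdj (Sum.elim sK sH) (Sum.elim tK tH) ε a b ∨ False) x y ↔
        Relation.EqvGen (fun a b => edgeAdj sK tK εK a b ∨ edgeAdj sH tH εH a b) x y := by
      refine eqvGen_congr (fun a b => ?_)
      rw [or_false, adj_sum_iff]
    have step2 : Relation.EqvGen (fun a b => edgeAdj sK tK εK a b ∨ edgeAdj sH tH εH a b) x y ↔
        Relation.EqvGen (fun a b => R1 a b ∨ R2 a b) x y := by
      constructor
      · exact Relation.EqvGen.mono (fun a b (hab : edgeAdj sK tK εK a b ∨ edgeAdj sH tH εH a b) =>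
          hab.imp (Relation.EqvGen.rel a b) (Relation.EqvGen.rel a b)) x y
      · refine eqvGen_le (Relation.EqvGen.is_equivalence _) ?_
        rintro a b (hab | hab)
        · exact Relation.EqvGen.mono (fun c d h => Or.inl h) _ _ hab
        · exact Relation.EqvGen.mono (fun c d h => Or.inr h) _ _ hab
    exact (step1.trans step2).trans (gen_decomp h1 h2 hm1 hm2 hcross)
  let δK := inducedPart U sK tK εK
  let δH := inducedPart U sH tH εH
  have hsup : ∀ v v' : ↥U, (δK ⊔ δH) v v' ↔
      Relation.EqvGen (fun a b : ↥U => δK a b ∨ δH a b) v v' := by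
    intro v v'; rw [Setoid.sup_eq_eqvGen]; rfl
  have toQ : ∀ v u : ↥U, (R1 v.1 u.1 ∨ R2 v.1 u.1) →
      Relation.EqvGen (fun a b : ↥U => δK a b ∨ δH a b) v u := by
    rintro v u (h | h)
    · exact Relation.EqvGen.rel _ _ (Or.inl h)
    · exact Relation.EqvGen.rel _ _ (Or.inr h)
  have liftQ : ∀ {u u' : ↥U},
      Relation.EqvGen (fun v v' : ↥U => R1 v.1 v'.1 ∨ R2 v.1 v'.1) u u' →
      Relation.EqvGen (fun a b : ↥U => δK a b ∨ δH a b) u u' :=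
    fun h => eqvGen_le (Relation.EqvGen.is_equivalence _) (fun a b hab => toQ a b hab) h
  constructor
  · intro hconn
    obtain ⟨u0, hu0⟩ := hU
    have hNIK : NoIslands VK U sK tK εK := by
      intro x hx
      have hG := (conv x u0).mp (hconn x trivial u0 trivial)
      rcases hG with h | h | ⟨u, u', l1, q, l2⟩
      · exact ⟨u0, hu0, h⟩
      · rcases hm2 x u0 h with rfl | ⟨ha, _⟩
        · exact ⟨x, hu0, Relation.EqvGen.refl x⟩
        · exact ⟨x, ⟨hx, ha⟩, Relation.EqvGen.refl x⟩
      · rcases l1 with h | h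
        · exact ⟨u.1, u.2, h⟩
        · rcases hm2 x u.1 h with heq | ⟨ha, _⟩
          · exact ⟨u.1, u.2, heq ▸ Relation.EqvGen.refl x⟩
          · exact ⟨x, ⟨hx, ha⟩, Relation.EqvGen.refl x⟩
    have hNIH : NoIslands VH U sH tH εH := by
      intro x hx
      have hG := (conv x u0).mp (hconn x trivial u0 trivial)
      rcases hG with h | h | ⟨u, u', l1, q, l2⟩
      · rcases hm1 x u0 h with rfl | ⟨ha, _⟩
        · exact ⟨x, hu0, Relation.EqvGen.refl x⟩
        · exact ⟨x, ⟨ha, hx⟩, Relation.EqvGen.refl x⟩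
      · exact ⟨u0, hu0, h⟩
      · rcases l1 with h | h
        · rcases hm1 x u.1 h with heq | ⟨ha, _⟩
          · exact ⟨u.1, u.2, heq ▸ Relation.EqvGen.refl x⟩
          · exact ⟨x, ⟨ha, hx⟩, Relation.EqvGen.refl x⟩
        · exact ⟨u.1, u.2, h⟩
    refine ⟨hNIK, hNIH, ?_⟩
    rw [Setoid.eq_top_iff]
    intro v v'
    rw [hsup]
    have hG := (conv v.1 v'.1).mp (hconn v.1 trivial v'.1 trivial)
    rcases hG with h | h | ⟨u, u', l1, q, l2⟩
    · exact toQ v v' (Or.inl h)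
    · exact toQ v v' (Or.inr h)
    · exact Relation.EqvGen.trans _ _ _ (toQ v u l1)
        (Relation.EqvGen.trans _ _ _ (liftQ q) (toQ u' v' l2))
  · rintro ⟨hNIK, hNIH, htop⟩ x _ y _
    have conv2 : ∀ a b : V, Relation.EqvGen (fun a b => R1 a b ∨ R2 a b) a b →
        Relation.EqvGen
          (fun a b => edgeAdj (Sum.elim sK sH) (Sum.elim tK tH) ε a b ∨ False) a b := by
      intro a b h
      refine eqvGen_le (Relation.EqvGen.is_equivalence _) ?_ h
      rintro c d (hcd | hcd)
      · refine Relation.EqvGen.mono (fun a b hab => ?_) _ _ hcd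
        exact Or.inl ((adj_sum_iff sK tK sH tH ε a b).mpr (Or.inl hab))
      · refine Relation.EqvGen.mono (fun a b hab => ?_) _ _ hcd
        exact Or.inl ((adj_sum_iff sK tK sH tH ε a b).mpr (Or.inr hab))
    have reachU : ∀ a : V, ∃ u : ↥U, Relation.EqvGen (fun a b => R1 a b ∨ R2 a b) a u.1 := by
      intro a
      have haVKH : a ∈ VK ∪ VH := by rw [hcover]; trivial
      rcases haVKH with ha | ha
      · obtain ⟨u, huU, hr⟩ := hNIK a ha
        exact ⟨⟨u, huU⟩, Relation.EqvGen.rel _ _ (Or.inl hr)⟩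
      · obtain ⟨u, huU, hr⟩ := hNIH a ha
        exact ⟨⟨u, huU⟩, Relation.EqvGen.rel _ _ (Or.inr hr)⟩
    obtain ⟨u, hxu⟩ := reachU x
    obtain ⟨u', hyu'⟩ := reachU y
    have hq : Relation.EqvGen (fun a b : ↥U => δK a b ∨ δH a b) u u' :=
      (hsup _ _).mp (Setoid.eq_top_iff.mp htop _ _)
    have lift2 : ∀ {a b : ↥U}, Relation.EqvGen (fun a b : ↥U => δK a b ∨ δH a b) a b →
        Relation.EqvGen (fun a b => R1 a b ∨ R2 a b) a.1 b.1 := by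
      intro a b h
      induction h with
      | rel a b hab => exact Relation.EqvGen.rel _ _ hab
      | refl a => exact Relation.EqvGen.refl _
      | symm a b _ ih => exact Relation.EqvGen.symm _ _ ih
      | trans a b c _ _ ih1 ih2 => exact Relation.EqvGen.trans _ _ _ ih1 ih2
    exact conv2 x y (Relation.EqvGen.trans _ _ _ hxu
      (Relation.EqvGen.trans _ _ _ (lift2 hq) (Relation.EqvGen.symm _ _ hyu')))

end NegamiState
section NegamiSum

lemma sum_delta_mul {S : Type} [Fintype S] (d : S) (g : S → ℝ) :
    ∑ δ : S, (if d = δ then g δ else 0) = g d := by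
  simp [Finset.sum_ite_eq]

lemma single_extract {S : Type} [Fintype S] (a : S) (P : Prop) (T : S → Prop) (c : ℝ) :
    (if P ∧ T a then c else 0) =
      ∑ δ : S, (if T δ then (1:ℝ) else 0) * (if P ∧ a = δ then c else 0) := by
  have hterm : ∀ δ, (if T δ then (1:ℝ) else 0) * (if P ∧ a = δ then c else 0)
      = if a = δ then (if P ∧ T δ then c else 0) else 0 := by
    intro δ
    by_cases h1 : a = δ
    · subst h1
      by_cases hp : P <;> by_cases ht : T a <;> simp [hp, ht]
    · have h2 : ¬(P ∧ a = δ) := fun h => h1 h.2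
      simp [h1, h2]
  rw [Finset.sum_congr rfl (fun δ _ => hterm δ), sum_delta_mul]

lemma double_extract {S : Type} [Fintype S] (a b : S) (P Q : Prop) (T : S → S → Prop)
    (c d : ℝ) :
    (if P ∧ Q ∧ T a b then c * d else 0) =
      ∑ δ : S, ∑ δ' : S, (if T δ δ' then (1:ℝ) else 0) *
        (if P ∧ a = δ then c else 0) * (if Q ∧ b = δ' then d else 0) := by
  have hterm : ∀ δ δ', (if T δ δ' then (1:ℝ) else 0) *
      (if P ∧ a = δ then c else 0) * (if Q ∧ b = δ' then d else 0)
      = if a = δ then (if b = δ' then (if P ∧ Q ∧ T δ δ' then c * d else 0) else 0) else 0 := by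
    intro δ δ'
    by_cases h1 : a = δ
    · subst h1
      by_cases h2 : b = δ'
      · subst h2
        by_cases hp : P <;> by_cases hq : Q <;> by_cases ht : T a b <;>
          simp [hp, hq, ht]
      · have h3 : ¬(Q ∧ b = δ') := fun h => h2 h.2
        simp [h2, h3]
    · have h3 : ¬(P ∧ a = δ) := fun h => h1 h.2
      simp [h1, h3]
  rw [Finset.sum_congr rfl (fun δ _ => Finset.sum_congr rfl (fun δ' _ => hterm δ δ'))]
  have step : ∀ δ, (∑ δ' : S, if a = δ then
      (if b = δ' then (if P ∧ Q ∧ T δ δ' then c * d else 0) else 0) else 0)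
      = if a = δ then (if P ∧ Q ∧ T δ b then c * d else 0) else 0 := by
    intro δ
    by_cases h1 : a = δ <;> simp [h1, sum_delta_mul]
  rw [Finset.sum_congr rfl (fun δ _ => step δ), sum_delta_mul]

end NegamiSum
section NegamiRel

lemma relOf_connMod {V E : Type} [Fintype V] [Fintype E] {W : Set V} (U : Set V)
    (hsub : U ⊆ W) (hU : U.Nonempty)
    {s t : E → V} (hK : ∀ e, s e ∈ W ∧ t e ∈ W) (p : E → ℝ)
    (γ : Setoid ↥U) :
    relOf p (ConnectedModOn W s t (partRel U γ)) =
      ∑ δ : Setoid ↥U, connMatrix ↥U δ γ *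
        (∑ ε : E → Bool,
          if NoIslands W U s t ε ∧ inducedPart U s t ε = δ
          then stProb p ε else 0) := by
  unfold relOf
  have main : ∀ ε : E → Bool,
      (if ConnectedModOn W s t (partRel U γ) ε then stProb p ε else 0) =
      ∑ δ : Setoid ↥U, connMatrix ↥U δ γ *
        (if NoIslands W U s t ε ∧ inducedPart U s t ε = δ
          then stProb p ε else 0) := by
    intro ε
    rw [if_congr (connMod_iff U hsub hU hK γ ε) rfl rfl]
    exact single_extract (S := Setoid ↥U) (inducedPart U s t ε)
      (NoIslands W U s t ε) (fun δ => δ ⊔ γ = ⊤) (stProb p ε)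
  rw [Finset.sum_congr rfl (fun ε _ => main ε), Finset.sum_comm]
  exact Finset.sum_congr rfl (fun δ _ => (Finset.mul_sum
    (Finset.univ : Finset (E → Bool))
    (fun ε => if NoIslands W U s t ε ∧ inducedPart U s t ε = δ
      then stProb p ε else 0) (connMatrix ↥U δ γ)).symm)

lemma sum_arrow_split {EK EH : Type} [Fintype EK] [Fintype EH]
    (inst : Fintype (EK ⊕ EH → Bool)) (f : (EK ⊕ EH → Bool) → ℝ) :
    @Finset.sum _ _ _ (@Finset.univ _ inst) f
      = ∑ εK : EK → Bool, ∑ εH : EH → Bool, f (Sum.elim εK εH) := by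
  rw [Subsingleton.elim inst inferInstance]
  refine Eq.trans (Fintype.sum_equiv (Equiv.sumArrowEquivProdArrow EK EH Bool)
    _ (fun q => f (Sum.elim q.1 q.2)) (fun ε => ?_)) (Fintype.sum_prod_type _)
  exact congrArg f (funext fun x => by cases x <;> rfl)

lemma sum_comm4 {A B C D M : Type} [AddCommMonoid M]
    [Fintype A] [Fintype B] [Fintype C] [Fintype D] (f : A → B → C → D → M) :
    ∑ a, ∑ b, ∑ c, ∑ d, f a b c d = ∑ c, ∑ d, ∑ a, ∑ b, f a b c d :=
  calc ∑ a, ∑ b, ∑ c, ∑ d, f a b c d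
      = ∑ a, ∑ c, ∑ b, ∑ d, f a b c d :=
        Finset.sum_congr rfl fun a _ => Finset.sum_comm
    _ = ∑ c, ∑ a, ∑ b, ∑ d, f a b c d := Finset.sum_comm
    _ = ∑ c, ∑ a, ∑ d, ∑ b, f a b c d :=
        Finset.sum_congr rfl fun c _ => Finset.sum_congr rfl fun a _ => Finset.sum_comm
    _ = ∑ c, ∑ d, ∑ a, ∑ b, f a b c d :=
        Finset.sum_congr rfl fun c _ => Finset.sum_comm

lemma relOf_state {V EK EH : Type} [Fintype V] [Fintype EK] [Fintype EH] {VK VH : Set V}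
    (hcover : VK ∪ VH = Set.univ) (hU : (VK ∩ VH).Nonempty)
    {sK tK : EK → V} (hK : ∀ e, sK e ∈ VK ∧ tK e ∈ VK)
    {sH tH : EH → V} (hH : ∀ e, sH e ∈ VH ∧ tH e ∈ VH)
    (pK : EK → ℝ) (pH : EH → ℝ) :
    relOf (Sum.elim pK pH)
        (ConnectedState Set.univ (Sum.elim sK sH) (Sum.elim tK tH)) =
      ∑ δ : Setoid ↥(VK ∩ VH), ∑ δ' : Setoid ↥(VK ∩ VH),
        connMatrix ↥(VK ∩ VH) δ δ' *
          (∑ ε : EK → Bool,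
            if NoIslands VK (VK ∩ VH) sK tK ε ∧ inducedPart (VK ∩ VH) sK tK ε = δ
            then stProb pK ε else 0) *
          (∑ ε : EH → Bool,
            if NoIslands VH (VK ∩ VH) sH tH ε ∧ inducedPart (VK ∩ VH) sH tH ε = δ'
            then stProb pH ε else 0) := by
  unfold relOf
  have main : ∀ (εK : EK → Bool) (εH : EH → Bool),
      (if ConnectedState Set.univ (Sum.elim sK sH) (Sum.elim tK tH) (Sum.elim εK εH)
        then stProb (Sum.elim pK pH) (Sum.elim εK εH) else 0) =
      ∑ δ : Setoid ↥(VK ∩ VH), ∑ δ' : Setoid ↥(VK ∩ VH),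
        connMatrix ↥(VK ∩ VH) δ δ' *
          (if NoIslands VK (VK ∩ VH) sK tK εK ∧ inducedPart (VK ∩ VH) sK tK εK = δ
            then stProb pK εK else 0) *
          (if NoIslands VH (VK ∩ VH) sH tH εH ∧ inducedPart (VK ∩ VH) sH tH εH = δ'
            then stProb pH εH else 0) := by
    intro εK εH
    have hfac : stProb (Sum.elim pK pH) (Sum.elim εK εH) = stProb pK εK * stProb pH εH := by
      unfold stProb
      rw [Fintype.prod_sum_type]
      rfl
    rw [if_congr (connState_iff hcover hU hK hH (Sum.elim εK εH)) rfl rfl, hfac]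
    exact double_extract (S := Setoid ↥(VK ∩ VH))
      (inducedPart (VK ∩ VH) sK tK εK) (inducedPart (VK ∩ VH) sH tH εH)
      (NoIslands VK (VK ∩ VH) sK tK εK) (NoIslands VH (VK ∩ VH) sH tH εH)
      (fun δ δ' => δ ⊔ δ' = ⊤) (stProb pK εK) (stProb pH εH)
  refine Eq.trans (sum_arrow_split (EK := EK) (EH := EH) _ _) ?_
  show (∑ εK : EK → Bool, ∑ εH : EH → Bool,
      if ConnectedState Set.univ (Sum.elim sK sH) (Sum.elim tK tH) (Sum.elim εK εH)
        then stProb (Sum.elim pK pH) (Sum.elim εK εH) else 0) = _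
  rw [Finset.sum_congr rfl (fun εK _ => Finset.sum_congr rfl (fun εH _ => main εK εH))]
  rw [sum_comm4 (fun (εK : EK → Bool) (εH : EH → Bool)
    (δ δ' : Setoid ↥(VK ∩ VH)) =>
      connMatrix ↥(VK ∩ VH) δ δ' *
        (if NoIslands VK (VK ∩ VH) sK tK εK ∧ inducedPart (VK ∩ VH) sK tK εK = δ
          then stProb pK εK else 0) *
        (if NoIslands VH (VK ∩ VH) sH tH εH ∧ inducedPart (VK ∩ VH) sH tH εH = δ'
          then stProb pH εH else 0))]
  refine Finset.sum_congr rfl (fun δ _ => Finset.sum_congr rfl (fun δ' _ => ?_))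
  simp only [Finset.mul_sum, Finset.sum_mul]
  rw [Finset.sum_comm]

end NegamiRel
section NegamiAlg

lemma connMatrix_symm {U : Type} [Finite U] (δ δ' : Setoid U) :
    connMatrix U δ δ' = connMatrix U δ' δ := by
  unfold connMatrix
  rw [sup_comm]

lemma negami_algebra {S : Type} [Fintype S] (cm β : Matrix S S ℝ)
    (hcm : ∀ δ δ', cm δ δ' = cm δ' δ) (hinv : cm * β = 1) (A B : S → ℝ) :
    ∑ δ : S, ∑ δ' : S, cm δ δ' * A δ * B δ' =
      ∑ γ : S, ∑ γ' : S, β γ γ' * (∑ δ : S, cm δ γ * A δ) * (∑ δ' : S, cm δ' γ' * B δ') := by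
  have inner : ∀ δ δ', (∑ γ : S, ∑ γ' : S, cm δ γ * β γ γ' * cm δ' γ') = cm δ δ' := by
    intro δ δ'
    have h1 : ∀ γ', (∑ γ : S, cm δ γ * β γ γ') = (1 : Matrix S S ℝ) δ γ' := by
      intro γ'
      rw [← hinv, Matrix.mul_apply]
    calc (∑ γ : S, ∑ γ' : S, cm δ γ * β γ γ' * cm δ' γ')
        = ∑ γ' : S, ∑ γ : S, cm δ γ * β γ γ' * cm δ' γ' := Finset.sum_comm
      _ = ∑ γ' : S, (∑ γ : S, cm δ γ * β γ γ') * cm δ' γ' :=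
          Finset.sum_congr rfl fun γ' _ => (Finset.sum_mul _ _ _).symm
      _ = ∑ γ' : S, (if δ = γ' then (1:ℝ) else 0) * cm δ' γ' := by
          refine Finset.sum_congr rfl fun γ' _ => ?_
          rw [h1 γ', Matrix.one_apply]
      _ = ∑ γ' : S, (if δ = γ' then cm δ' γ' else 0) :=
          Finset.sum_congr rfl fun γ' _ => by split_ifs <;> ring
      _ = cm δ' δ := sum_delta_mul δ _
      _ = cm δ δ' := hcm δ' δ
  symm
  calc ∑ γ : S, ∑ γ' : S, β γ γ' * (∑ δ : S, cm δ γ * A δ) * (∑ δ' : S, cm δ' γ' * B δ')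
      = ∑ γ : S, ∑ γ' : S, ∑ δ : S, ∑ δ' : S,
          β γ γ' * (cm δ γ * A δ) * (cm δ' γ' * B δ') := by
        refine Finset.sum_congr rfl fun γ _ => Finset.sum_congr rfl fun γ' _ => ?_
        rw [Finset.mul_sum (Finset.univ : Finset S) (fun δ => cm δ γ * A δ) (β γ γ'),
          Finset.sum_mul]
        refine Finset.sum_congr rfl fun δ _ => ?_
        rw [Finset.mul_sum]
    _ = ∑ δ : S, ∑ δ' : S, ∑ γ : S, ∑ γ' : S,
          β γ γ' * (cm δ γ * A δ) * (cm δ' γ' * B δ') := sum_comm4 _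
    _ = ∑ δ : S, ∑ δ' : S, cm δ δ' * A δ * B δ' := by
        refine Finset.sum_congr rfl fun δ _ => Finset.sum_congr rfl fun δ' _ => ?_
        calc ∑ γ : S, ∑ γ' : S, β γ γ' * (cm δ γ * A δ) * (cm δ' γ' * B δ')
            = ∑ γ : S, ∑ γ' : S, (cm δ γ * β γ γ' * cm δ' γ') * (A δ * B δ') :=
              Finset.sum_congr rfl fun γ _ => Finset.sum_congr rfl fun γ' _ => by ring
          _ = (∑ γ : S, ∑ γ' : S, cm δ γ * β γ γ' * cm δ' γ') * (A δ * B δ') :=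
              ((Finset.sum_mul _ _ _).trans
                (Finset.sum_congr rfl fun γ _ => Finset.sum_mul _ _ _)).symm
          _ = cm δ δ' * (A δ * B δ') := by rw [inner δ δ']
          _ = cm δ δ' * A δ * B δ' := by ring

end NegamiAlg
/-- Negami splitting for the classical reliability,
`R_G = Σ_{γ,γ'} β_{γ,γ'} R_{K/γ} · R_{H/γ'}`. -/
theorem classical_negami_splitting {V EK EH : Type}
    [Fintype V] [Fintype EK] [Fintype EH]
    (VK VH : Set V) (hcover : VK ∪ VH = Set.univ) (hU : (VK ∩ VH).Nonempty)
    (sK tK : EK → V) (hK : ∀ e, sK e ∈ VK ∧ tK e ∈ VK)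
    (sH tH : EH → V) (hH : ∀ e, sH e ∈ VH ∧ tH e ∈ VH)
    (pK : EK → ℝ) (pH : EH → ℝ)
    (hpK : ∀ e, pK e ∈ Set.Icc (0:ℝ) 1) (hpH : ∀ e, pH e ∈ Set.Icc (0:ℝ) 1)
    (β : Matrix (Setoid ↥(VK ∩ VH)) (Setoid ↥(VK ∩ VH)) ℝ)
    (hβ : β * connMatrix ↥(VK ∩ VH) = 1 ∧ connMatrix ↥(VK ∩ VH) * β = 1) :
    relOf (Sum.elim pK pH)
        (ConnectedState Set.univ (Sum.elim sK sH) (Sum.elim tK tH))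
      = ∑ γ : Setoid ↥(VK ∩ VH), ∑ γ' : Setoid ↥(VK ∩ VH),
          β γ γ' *
            relOf pK (ConnectedModOn VK sK tK (partRel (VK ∩ VH) γ)) *
            relOf pH (ConnectedModOn VH sH tH (partRel (VK ∩ VH) γ')) := by
  have hR : (∑ γ : Setoid ↥(VK ∩ VH), ∑ γ' : Setoid ↥(VK ∩ VH),
        β γ γ' *
          relOf pK (ConnectedModOn VK sK tK (partRel (VK ∩ VH) γ)) *
          relOf pH (ConnectedModOn VH sH tH (partRel (VK ∩ VH) γ'))) =
      ∑ γ : Setoid ↥(VK ∩ VH), ∑ γ' : Setoid ↥(VK ∩ VH),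
        β γ γ' *
          (∑ δ : Setoid ↥(VK ∩ VH), connMatrix ↥(VK ∩ VH) δ γ *
            (∑ ε : EK → Bool,
              if NoIslands VK (VK ∩ VH) sK tK ε ∧ inducedPart (VK ∩ VH) sK tK ε = δ
              then stProb pK ε else 0)) *
          (∑ δ' : Setoid ↥(VK ∩ VH), connMatrix ↥(VK ∩ VH) δ' γ' *
            (∑ ε : EH → Bool,
              if NoIslands VH (VK ∩ VH) sH tH ε ∧ inducedPart (VK ∩ VH) sH tH ε = δ'
              then stProb pH ε else 0)) :=
    Finset.sum_congr rfl fun γ _ => Finset.sum_congr rfl fun γ' _ => by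
      rw [relOf_connMod (VK ∩ VH) (fun a ha => ha.1) hU hK pK γ,
        relOf_connMod (VK ∩ VH) (fun a ha => ha.2) hU hH pH γ']
  rw [relOf_state hcover hU hK hH pK pH, hR]
  exact negami_algebra (connMatrix ↥(VK ∩ VH)) β (connMatrix_symm) hβ.2
    (fun δ => ∑ ε : EK → Bool,
      if NoIslands VK (VK ∩ VH) sK tK ε ∧ inducedPart (VK ∩ VH) sK tK ε = δ
      then stProb pK ε else 0)
    (fun δ' => ∑ ε : EH → Bool,
      if NoIslands VH (VK ∩ VH) sH tH ε ∧ inducedPart (VK ∩ VH) sH tH ε = δ'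
      then stProb pH ε else 0)
end
end
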